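/- Let (Q,q,k) be a regular local ring, I1, I2 ⊆ q^2 q-primary ideals with R1 = Q/I1 and R2 = Q/I2 Gorenstein of socle degrees s1 ≤ s2, and suppose R = Q/(I1 ∩ I2) has type 2 and socle degree s. Let b = min{ i ≥ 1 : q^{i+1} ∩ I2 ⊆ I1 }. Then the rank of m^s (where m is the maximal ideal of R) equals 2 if and only if b = s, and in that case s1 = s. -/

import Mathlib

open IsLocalRing

/-- A Noetherian local ring is regular if its maximal ideal is generated by a
regular sequence. -/
def IsRegularLocal (Q : Type*) [CommRing Q] [IsLocalRing Q] : Prop :=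
  ∃ L : List Q, RingTheory.Sequence.IsRegular Q L ∧
    Ideal.span {x | x ∈ L} = maximalIdeal Q

/-- `σ` is the socle degree of `Q/J`: `q^σ ⊄ J` and `q^{σ+1} ⊆ J`. -/
def SocDeg {Q : Type*} [CommRing Q] [IsLocalRing Q] (J : Ideal Q) (σ : ℕ) : Prop :=
  ¬ maximalIdeal Q ^ σ ≤ J ∧ maximalIdeal Q ^ (σ + 1) ≤ J

/-- `Q/J` has type 1 (is artinian Gorenstein). -/
def HasTypeOne {Q : Type*} [CommRing Q] [IsLocalRing Q] (J : Ideal Q) : Prop :=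
  ∃ x : Q, x ∉ J ∧ J.colon (maximalIdeal Q) = J ⊔ Ideal.span {x}

/-- `Q/J` has type 2. -/
def HasTypeTwo {Q : Type*} [CommRing Q] [IsLocalRing Q] (J : Ideal Q) : Prop :=
  ∃ x y : Q, J.colon (maximalIdeal Q) = J ⊔ Ideal.span {x, y} ∧
    ∀ a b : Q, a * x + b * y ∈ J → a ∈ maximalIdeal Q ∧ b ∈ maximalIdeal Q

section Aux

variable {Q : Type*} [CommRing Q] [IsLocalRing Q]

lemma aux_one_not_mem : (1 : Q) ∉ maximalIdeal Q := fun h =>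
  (IsLocalRing.maximalIdeal.isMaximal Q).ne_top (Ideal.eq_top_of_isUnit_mem _ h isUnit_one)

lemma aux_unit_of_not_mem {c : Q} (h : c ∉ maximalIdeal Q) : IsUnit c := by
  by_contra hc; exact h ((mem_maximalIdeal c).2 hc)

lemma aux_mem_colon_iff (I : Ideal Q) (r : Q) :
    r ∈ I.colon (maximalIdeal Q) ↔ ∀ p ∈ maximalIdeal Q, r * p ∈ I := by
  rw [Submodule.mem_colon]
  simp [smul_eq_mul]

/-- Forward direction core: if the rank of `m^s` is 2 but `q^s ⊓ I2 ≤ I1`,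
we get a contradiction via the 1-dimensional socle of `Q/I2`. -/
lemma aux_fwd (I1 I2 : Ideal Q) (s : ℕ)
    (h2top : HasTypeOne I2)
    (hpow : maximalIdeal Q ^ (s + 1) ≤ I2)
    (hcap : maximalIdeal Q ^ s ⊓ I2 ≤ I1)
    (f g : Q)
    (hspan : maximalIdeal Q ^ s ⊔ (I1 ⊓ I2) = (I1 ⊓ I2) ⊔ Ideal.span {f, g})
    (hind : ∀ a c : Q, a * f + c * g ∈ I1 ⊓ I2 →
      a ∈ maximalIdeal Q ∧ c ∈ maximalIdeal Q) : False := by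
  set q := maximalIdeal Q with hqdef
  set I := I1 ⊓ I2 with hIdef
  have hf : f ∈ q ^ s ⊔ I := by
    rw [hspan]; exact Submodule.mem_sup_right (Ideal.subset_span (by simp))
  have hg : g ∈ q ^ s ⊔ I := by
    rw [hspan]; exact Submodule.mem_sup_right (Ideal.subset_span (by simp))
  obtain ⟨f', hf', i, hi, hfd⟩ := Submodule.mem_sup.1 hf
  obtain ⟨g', hg', i', hi', hgd⟩ := Submodule.mem_sup.1 hg
  have hind' : ∀ a c : Q, a * f' + c * g' ∈ I → a ∈ q ∧ c ∈ q := by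
    intro a c h
    apply hind
    have heq : a * f + c * g = (a * f' + c * g') + (a * i + c * i') := by
      rw [← hfd, ← hgd]; ring
    rw [heq]
    exact I.add_mem h (I.add_mem (I.mul_mem_left a hi) (I.mul_mem_left c hi'))
  obtain ⟨x2, -, hx2⟩ := h2top
  have hcolon : ∀ z : Q, z ∈ q ^ s → z ∈ I2.colon q := by
    intro z hz
    rw [aux_mem_colon_iff]
    intro p hp
    exact hpow (by rw [pow_succ]; exact Ideal.mul_mem_mul hz hp)
  have hx2c : ∀ p ∈ q, x2 * p ∈ I2 := by
    have : x2 ∈ I2.colon q := by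
      rw [hx2]; exact Submodule.mem_sup_right (Ideal.subset_span rfl)
    exact (aux_mem_colon_iff I2 x2).1 this
  have hfc := hcolon f' hf'
  have hgc := hcolon g' hg'
  rw [hx2] at hfc hgc
  obtain ⟨j, hj, t, ht, hjt⟩ := Submodule.mem_sup.1 hfc
  obtain ⟨j', hj', t', ht', hjt'⟩ := Submodule.mem_sup.1 hgc
  obtain ⟨u, hu⟩ := Ideal.mem_span_singleton'.1 ht
  obtain ⟨v, hv⟩ := Ideal.mem_span_singleton'.1 ht'
  -- f' = j + u * x2, g' = j' + v * x2
  have key2 : v * f' + (-u) * g' ∈ I2 := by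
    have heq : v * f' + (-u) * g' = v * j + (-u) * j' := by
      rw [← hjt, ← hjt', ← hu, ← hv]; ring
    rw [heq]
    exact I2.add_mem (I2.mul_mem_left v hj) (I2.mul_mem_left (-u) hj')
  have keys : v * f' + (-u) * g' ∈ q ^ s :=
    Ideal.add_mem _ (Ideal.mul_mem_left _ v hf') (Ideal.mul_mem_left _ (-u) hg')
  have keyI : v * f' + (-u) * g' ∈ I := ⟨hcap ⟨keys, key2⟩, key2⟩
  obtain ⟨hvq, huq'⟩ := hind' _ _ keyI
  have huq : u ∈ q := by simpa using huq'
  have hfI2 : f' ∈ I2 := by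
    rw [← hjt, ← hu]
    exact I2.add_mem hj (by rw [mul_comm]; exact hx2c u huq)
  have hfI : f' ∈ I := ⟨hcap ⟨hf', hfI2⟩, hfI2⟩
  have hone : (1 : Q) ∈ q := (hind' 1 0 (by
    rw [one_mul, zero_mul, add_zero]; exact hfI)).1
  exact aux_one_not_mem hone

/-- Backward direction core: witnesses for rank 2. -/
lemma aux_bwd (I1 I2 : Ideal Q) (s : ℕ)
    (htype2 : HasTypeTwo (I1 ⊓ I2))
    (hpow : maximalIdeal Q ^ (s + 1) ≤ I1 ⊓ I2)
    (f g : Q) (hfs : f ∈ maximalIdeal Q ^ s) (hf2 : f ∈ I2) (hf1 : f ∉ I1)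
    (hgs : g ∈ maximalIdeal Q ^ s) (hg2 : g ∉ I2) :
    maximalIdeal Q ^ s ⊔ (I1 ⊓ I2) = (I1 ⊓ I2) ⊔ Ideal.span {f, g} ∧
    ∀ a c : Q, a * f + c * g ∈ I1 ⊓ I2 →
      a ∈ maximalIdeal Q ∧ c ∈ maximalIdeal Q := by
  set q := maximalIdeal Q with hqdef
  set I := I1 ⊓ I2 with hIdef
  have qmul : ∀ z w : Q, z ∈ q ^ s → w ∈ q → w * z ∈ I := fun z w hz hw =>
    hpow (by rw [pow_succ']; exact Ideal.mul_mem_mul hw hz)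
  -- independence of f, g modulo I
  have hind : ∀ a c : Q, a * f + c * g ∈ I → a ∈ q ∧ c ∈ q := by
    intro a c h
    have hcq : c ∈ q := by
      by_contra hc
      apply hg2
      have hcg : c * g ∈ I2 := by
        have heq : c * g = (a * f + c * g) - a * f := by ring
        rw [heq]
        exact I2.sub_mem h.2 (I2.mul_mem_left a hf2)
      exact (Ideal.unit_mul_mem_iff_mem I2 (aux_unit_of_not_mem hc)).1 hcg
    have hcgI1 : c * g ∈ I1 := (qmul g c hgs hcq).1
    have haf : a * f ∈ I1 := by
      have heq : a * f = (a * f + c * g) - c * g := by ring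
      rw [heq]
      exact I1.sub_mem h.1 hcgI1
    have haq : a ∈ q := by
      by_contra ha
      exact hf1 ((Ideal.unit_mul_mem_iff_mem I1 (aux_unit_of_not_mem ha)).1 haf)
    exact ⟨haq, hcq⟩
  refine ⟨?_, hind⟩
  apply le_antisymm
  · -- q^s ⊔ I ≤ I ⊔ span {f, g}
    apply sup_le ?_ le_sup_left
    obtain ⟨x, y, hxy, -⟩ := htype2
    have hcolon : q ^ s ≤ I.colon q := by
      intro z hz
      rw [aux_mem_colon_iff]
      intro p hp
      exact hpow (by rw [pow_succ]; exact Ideal.mul_mem_mul hz hp)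
    have hxcol : ∀ p ∈ q, x * p ∈ I := by
      have : x ∈ I.colon q := by
        rw [hxy]; exact Submodule.mem_sup_right (Ideal.subset_span (by simp))
      exact (aux_mem_colon_iff I x).1 this
    have hycol : ∀ p ∈ q, y * p ∈ I := by
      have : y ∈ I.colon q := by
        rw [hxy]; exact Submodule.mem_sup_right (Ideal.subset_span (by simp))
      exact (aux_mem_colon_iff I y).1 this
    rw [hxy] at hcolon
    obtain ⟨i, hi, w, hw, hiw⟩ := Submodule.mem_sup.1 (hcolon hfs)
    obtain ⟨A, C, hAC⟩ := Ideal.mem_span_pair.1 hw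
    obtain ⟨i', hi', w', hw', hiw'⟩ := Submodule.mem_sup.1 (hcolon hgs)
    obtain ⟨A', C', hAC'⟩ := Ideal.mem_span_pair.1 hw'
    -- f = i + A x + C y ; g = i' + A' x + C' y
    set D := A * C' - C * A' with hD
    have hfspan : f ∈ Ideal.span ({f, g} : Set Q) := Ideal.subset_span (by simp)
    have hgspan : g ∈ Ideal.span ({f, g} : Set Q) := Ideal.subset_span (by simp)
    have hDu : IsUnit D := by
      by_contra hDq'
      have hDq : D ∈ q := (mem_maximalIdeal D).2 hDq'
      have h1 : C' * f + (-C) * g ∈ I := by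
        have heq : C' * f + (-C) * g = (C' * i + (-C) * i') + x * D := by
          rw [← hiw, ← hAC, ← hiw', ← hAC', hD]; ring
        rw [heq]
        exact I.add_mem (I.add_mem (I.mul_mem_left C' hi) (I.mul_mem_left (-C) hi'))
          (hxcol D hDq)
      have h2 : A' * f + (-A) * g ∈ I := by
        have heq : A' * f + (-A) * g = (A' * i + (-A) * i') + y * (-D) := by
          rw [← hiw, ← hAC, ← hiw', ← hAC', hD]; ring
        rw [heq]
        exact I.add_mem (I.add_mem (I.mul_mem_left A' hi) (I.mul_mem_left (-A) hi'))
          (hycol (-D) (neg_mem hDq))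
      obtain ⟨hC'q, hCq'⟩ := hind _ _ h1
      obtain ⟨hA'q, hAq'⟩ := hind _ _ h2
      have hAq : A ∈ q := by simpa using hAq'
      have hCq : C ∈ q := by simpa using hCq'
      have hfI : f ∈ I := by
        rw [← hiw, ← hAC]
        refine I.add_mem hi (I.add_mem ?_ ?_)
        · rw [mul_comm]; exact hxcol A hAq
        · rw [mul_comm]; exact hycol C hCq
      exact aux_one_not_mem ((hind 1 0 (by rw [one_mul, zero_mul, add_zero]; exact hfI)).1)
    obtain ⟨Du, hDu'⟩ := hDu
    have hxmem : x ∈ I ⊔ Ideal.span {f, g} := by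
      have hDx : D * x ∈ I ⊔ Ideal.span {f, g} := by
        have heq : D * x = (C' * f + (-C) * g) + (-(C' * i) + C * i') := by
          rw [← hiw, ← hAC, ← hiw', ← hAC', hD]; ring
        rw [heq]
        refine Submodule.add_mem _ (Submodule.mem_sup_right ?_) (Submodule.mem_sup_left ?_)
        · exact Ideal.add_mem _ (Ideal.mul_mem_left _ C' hfspan)
            (Ideal.mul_mem_left _ (-C) hgspan)
        · exact I.add_mem (by simpa using I.mul_mem_left (-C') hi) (I.mul_mem_left C hi')
      have heq : x = ↑Du⁻¹ * (D * x) := by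
        rw [← hDu', ← mul_assoc, Units.inv_mul, one_mul]
      rw [heq]
      exact Ideal.mul_mem_left _ _ hDx
    have hymem : y ∈ I ⊔ Ideal.span {f, g} := by
      have hDy : D * y ∈ I ⊔ Ideal.span {f, g} := by
        have heq : D * y = (A * g + (-A') * f) + (A' * i + -(A * i')) := by
          rw [← hiw, ← hAC, ← hiw', ← hAC', hD]; ring
        rw [heq]
        refine Submodule.add_mem _ (Submodule.mem_sup_right ?_) (Submodule.mem_sup_left ?_)
        · exact Ideal.add_mem _ (Ideal.mul_mem_left _ A hgspan)
            (Ideal.mul_mem_left _ (-A') hfspan)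
        · exact I.add_mem (I.mul_mem_left A' hi) (by simpa using I.mul_mem_left (-A) hi')
      have heq : y = ↑Du⁻¹ * (D * y) := by
        rw [← hDu', ← mul_assoc, Units.inv_mul, one_mul]
      rw [heq]
      exact Ideal.mul_mem_left _ _ hDy
    refine le_trans hcolon (sup_le le_sup_left ?_)
    rw [Ideal.span_le]
    rintro z hz
    simp only [Set.mem_insert_iff, Set.mem_singleton_iff] at hz
    rcases hz with rfl | rfl
    · exact hxmem
    · exact hymem
  · -- I ⊔ span {f, g} ≤ q^s ⊔ I
    apply sup_le le_sup_right
    rw [Ideal.span_le]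
    rintro z hz
    simp only [Set.mem_insert_iff, Set.mem_singleton_iff] at hz
    rcases hz with rfl | rfl
    · exact Submodule.mem_sup_left hfs
    · exact Submodule.mem_sup_left hgs

end Aux

/-- In the type-2 setup with Gorenstein `R1 = Q/I1`,
`R2 = Q/I2` of socle degrees `s1 ≤ s2`, `R = Q/(I1 ∩ I2)` of type 2 and socle
degree `s`, and `b = min{ i ≥ 1 : q^{i+1} ∩ I2 ⊆ I1 }`: the rank of `m^s`
(where `m = q/(I1 ∩ I2)`, so `m^s = (q^s + I)/I`) equals 2 iff `b = s`, and in
that case `s1 = s`. -/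
theorem stmt4 (Q : Type*) [CommRing Q] [IsLocalRing Q] [IsNoetherianRing Q]
    (hreg : IsRegularLocal Q)
    (I1 I2 : Ideal Q)
    (h1p : I1.IsPrimary) (h1r : I1.radical = maximalIdeal Q)
    (h2p : I2.IsPrimary) (h2r : I2.radical = maximalIdeal Q)
    (h1q2 : I1 ≤ maximalIdeal Q ^ 2) (h2q2 : I2 ≤ maximalIdeal Q ^ 2)
    (h1gor : HasTypeOne I1) (h2gor : HasTypeOne I2)
    (s1 s2 s b : ℕ)
    (hs1 : SocDeg I1 s1) (hs2 : SocDeg I2 s2) (hle : s1 ≤ s2)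
    (htype2 : HasTypeTwo (I1 ⊓ I2))
    (hs : SocDeg (I1 ⊓ I2) s)
    (hb : b = sInf {i : ℕ | 1 ≤ i ∧ maximalIdeal Q ^ (i + 1) ⊓ I2 ≤ I1}) :
    ((∃ x y : Q,
        maximalIdeal Q ^ s ⊔ (I1 ⊓ I2) = (I1 ⊓ I2) ⊔ Ideal.span {x, y} ∧
        ∀ a c : Q, a * x + c * y ∈ I1 ⊓ I2 →
          a ∈ maximalIdeal Q ∧ c ∈ maximalIdeal Q) ↔ b = s) ∧
    (b = s → s1 = s) := by
  clear hreg h1p h1r h2p h2r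
  set q := maximalIdeal Q with hqdef
  set I := I1 ⊓ I2 with hIdef
  -- basic facts about socle degrees
  have hs2s : s2 ≤ s := by
    by_contra hlt
    push_neg at hlt
    exact hs2.1 (le_trans (Ideal.pow_le_pow_right hlt) (le_trans hs.2 inf_le_right))
  have hs1s : s1 ≤ s := by
    by_contra hlt
    push_neg at hlt
    exact hs1.1 (le_trans (Ideal.pow_le_pow_right hlt) (le_trans hs.2 inf_le_left))
  have hss2 : s ≤ s2 := by
    by_contra hlt
    push_neg at hlt
    refine hs.1 (le_inf ?_ ?_)
    · exact le_trans (Ideal.pow_le_pow_right (by omega : s1 + 1 ≤ s)) hs1.2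
    · exact le_trans (Ideal.pow_le_pow_right (by omega : s2 + 1 ≤ s)) hs2.2
  have hseq : s = s2 := le_antisymm hss2 hs2s
  -- s = 0 is degenerate: q = ⊥
  rcases Nat.eq_zero_or_pos s with hs0 | hspos
  · subst hs0
    have hq2 : q ≤ q ^ 2 := by
      have h1 : q ^ (0 + 1) ≤ I := hs.2
      rw [zero_add, pow_one] at h1
      exact le_trans h1 (le_trans inf_le_left h1q2)
    have hqbot : q = ⊥ := by
      have hfg : q.FG := IsNoetherian.noetherian _
      refine Submodule.eq_bot_of_le_smul_of_le_jacobson_bot q q hfg ?_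
        (IsLocalRing.maximalIdeal_le_jacobson ⊥)
      rwa [smul_eq_mul, ← pow_two]
    have hIbot : I = ⊥ := by
      rw [eq_bot_iff]
      refine le_trans inf_le_left (le_trans h1q2 ?_)
      rw [hqbot]
      exact (zero_pow (two_ne_zero)).le
    have hbone : b = 1 := by
      rw [hb]
      have hset : {i : ℕ | 1 ≤ i ∧ q ^ (i + 1) ⊓ I2 ≤ I1} = {i : ℕ | 1 ≤ i} := by
        ext i
        simp only [Set.mem_setOf_eq, and_iff_left_iff_imp]
        intro hi
        rw [hqbot]
        have hzp : (⊥ : Ideal Q) ^ (i + 1) = ⊥ := zero_pow (by omega)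
        rw [hzp]
        exact le_trans inf_le_left bot_le
      rw [hset]
      have : sInf {i : ℕ | 1 ≤ i} = 1 := by
        apply le_antisymm (Nat.sInf_le (by simp)) (le_csInf ⟨1, by simp⟩ ?_)
        intro i hi
        exact hi
      exact this
    constructor
    · constructor
      · rintro ⟨x, y, hxy, hind⟩
        exfalso
        have hx0 : x = 0 ∧ y = 0 := by
          have h := hind y (-x) (by
            rw [hIbot]
            have : y * x + (-x) * y = 0 := by ring
            rw [this]
            exact Submodule.zero_mem ⊥)
          rw [hqbot] at h
          constructor
          · simpa using h.2
          · simpa using h.1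
        obtain ⟨rfl, rfl⟩ := hx0
        rw [hIbot] at hxy
        simp only [pow_zero, Ideal.one_eq_top, sup_bot_eq, bot_sup_eq] at hxy
        have hsp : Ideal.span ({(0 : Q), 0} : Set Q) = ⊥ := by simp
        rw [hsp] at hxy
        have h1 : (1 : Q) ∈ (⊥ : Ideal Q) := hxy ▸ Submodule.mem_top
        have h2 : (1 : Q) = 0 := by simpa using h1
        exact one_ne_zero h2
      · intro h; omega
    · intro h; omega
  -- s = 1 is impossible
  rcases Nat.lt_or_ge s 2 with hs1' | hs2'
  · have hseq1 : s = 1 := by omega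
    exfalso
    subst hseq1
    have hI1eq : I1 = q ^ 2 := by
      apply le_antisymm h1q2
      exact le_trans hs.2 inf_le_left
    have hIeq : I = q ^ 2 := by
      apply le_antisymm (le_trans inf_le_left h1q2) hs.2
    have hq2ne : ¬ q ≤ q ^ 2 := by
      intro hc
      rw [← hIeq] at hc
      exact hs.1 (by rwa [pow_one])
    have hcolon_le : I1.colon q ≤ q := by
      intro r hr
      by_contra hrq
      have hu := aux_unit_of_not_mem hrq
      apply hq2ne
      intro p hp
      have hrp : r * p ∈ I1 := (aux_mem_colon_iff I1 r).1 hr p hp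
      rw [hI1eq] at hrp
      obtain ⟨ru, hru⟩ := hu
      have : p = ↑ru⁻¹ * (r * p) := by rw [← hru, ← mul_assoc, Units.inv_mul, one_mul]
      rw [this]
      exact Ideal.mul_mem_left _ _ hrp
    obtain ⟨x, hxn, hx⟩ := h1gor
    obtain ⟨x0, y0, hxy0, hind0⟩ := htype2
    have hcoleq : I.colon q = I1.colon q := by
      rw [hIeq, hI1eq]
    have hx0c : x0 ∈ I1.colon q := by
      rw [← hcoleq, hxy0]
      exact Submodule.mem_sup_right (Ideal.subset_span (by simp))
    have hy0c : y0 ∈ I1.colon q := by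
      rw [← hcoleq, hxy0]
      exact Submodule.mem_sup_right (Ideal.subset_span (by simp))
    rw [hx] at hx0c hy0c
    obtain ⟨w, hw, t, ht, hwt⟩ := Submodule.mem_sup.1 hx0c
    obtain ⟨w', hw', t', ht', hwt'⟩ := Submodule.mem_sup.1 hy0c
    obtain ⟨ua, hua⟩ := Ideal.mem_span_singleton'.1 ht
    obtain ⟨uc, huc⟩ := Ideal.mem_span_singleton'.1 ht'
    have hwI : w ∈ I := by rw [hIeq, ← hI1eq]; exact hw
    have hwI' : w' ∈ I := by rw [hIeq, ← hI1eq]; exact hw'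
    have hkey : uc * x0 + (-ua) * y0 ∈ I := by
      have heq : uc * x0 + (-ua) * y0 = uc * w + (-ua) * w' := by
        rw [← hwt, ← hwt', ← hua, ← huc]; ring
      rw [heq]
      exact I.add_mem (I.mul_mem_left uc hwI) (I.mul_mem_left (-ua) hwI')
    obtain ⟨hucq, huaq'⟩ := hind0 _ _ hkey
    have huaq : ua ∈ q := by have h := q.neg_mem huaq'; rwa [neg_neg] at h
    have hxq : x ∈ q := hcolon_le (by rw [hx]; exact Submodule.mem_sup_right (Ideal.subset_span rfl))
    have hx0I : x0 ∈ I := by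
      rw [← hwt, ← hua]
      refine I.add_mem hwI ?_
      rw [hIeq, pow_two]
      exact Ideal.mul_mem_mul huaq hxq
    exact aux_one_not_mem ((hind0 1 0 (by rw [one_mul, zero_mul, add_zero]; exact hx0I)).1)
  -- main case : s ≥ 2
  · set S := {i : ℕ | 1 ≤ i ∧ q ^ (i + 1) ⊓ I2 ≤ I1} with hSdef
    have hsS : s ∈ S := ⟨by omega, le_trans inf_le_left (le_trans hs.2 inf_le_left)⟩
    have hbles : b ≤ s := hb ▸ Nat.sInf_le hsS
    have hkey : b = s ↔ ¬ (q ^ s ⊓ I2 ≤ I1) := by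
      constructor
      · intro hbs hcap
        have hmem : s - 1 ∈ S := by
          refine ⟨by omega, ?_⟩
          have : s - 1 + 1 = s := by omega
          rw [this]
          exact hcap
        have : b ≤ s - 1 := hb ▸ Nat.sInf_le hmem
        omega
      · intro hncap
        have hbmem : b ∈ S := hb ▸ Nat.sInf_mem ⟨s, hsS⟩
        by_contra hbs
        have hblt : b + 1 ≤ s := by omega
        exact hncap (le_trans (inf_le_inf_right I2
          (Ideal.pow_le_pow_right hblt)) hbmem.2)
    have hrank : (∃ x y : Q,
        q ^ s ⊔ I = I ⊔ Ideal.span {x, y} ∧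
        ∀ a c : Q, a * x + c * y ∈ I → a ∈ q ∧ c ∈ q) ↔ ¬ (q ^ s ⊓ I2 ≤ I1) := by
      constructor
      · rintro ⟨f, g, hspan, hind⟩ hcap
        exact aux_fwd I1 I2 s h2gor (le_trans hs.2 inf_le_right) hcap f g hspan hind
      · intro hncap
        obtain ⟨f, hfmem, hf1⟩ := SetLike.not_le_iff_exists.1 hncap
        have hgne : ¬ q ^ s ≤ I2 := by rw [hseq]; exact hs2.1
        obtain ⟨g, hgs, hg2⟩ := SetLike.not_le_iff_exists.1 hgne
        obtain ⟨hspan, hind⟩ := aux_bwd I1 I2 s htype2 hs.2 f g hfmem.1 hfmem.2 hf1 hgs hg2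
        exact ⟨f, g, hspan, hind⟩
    refine ⟨hrank.trans hkey.symm, ?_⟩
    intro hbs
    by_contra hs1ne
    have hs1lt : s1 + 1 ≤ s := by omega
    apply hkey.1 hbs
    exact le_trans inf_le_left (le_trans (Ideal.pow_le_pow_right hs1lt) hs1.2)
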